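/- Let (P,⪯₊,⪯₋) be a compatible double poset and let Ψ : ℝ^P → ℝ^P be the double transfer map, Ψ(g) = Φ_{⪯₊}(g⁺) − Φ_{⪯₋}(g⁻). Then Ψ is a bijection of ℝ^P onto itself, and it restricts to a bijection of ℤ^P onto ℤ^P (i.e., Ψ is lattice-preserving). -/

import Mathlib

open Set Pointwise

/-- A double poset is compatible if some linear order refines both partial orders. -/
def Compatible (P : Type*) (lep lem : P → P → Prop) : Prop :=
  ∃ l : P → P → Prop, IsLinearOrder P l ∧
    (∀ a b, lep a b → l a b) ∧ (∀ a b, lem a b → l a b)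

/-- The inverse transfer map of a poset `(P, le)` applied to `h : P → ℝ`:
`(Φ h)(b)` is the maximum of `∑_{a ∈ C} h(a)` over chains `C` ending at `b`. -/
noncomputable def transferInv {P : Type*} [Fintype P] (le : P → P → Prop)
    (h : P → ℝ) (b : P) : ℝ :=
  sSup {s : ℝ | ∃ C : Finset P, (∀ a ∈ C, ∀ a' ∈ C, le a a' ∨ le a' a) ∧
    b ∈ C ∧ (∀ a ∈ C, le a b) ∧ s = ∑ a ∈ C, h a}

/-- The double transfer map `Ψ(g) = Φ_{⪯₊}(g⁺) − Φ_{⪯₋}(g⁻)` of a double poset. -/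
noncomputable def doubleTransfer {P : Type*} [Fintype P]
    (lep lem : P → P → Prop) (g : P → ℝ) : P → ℝ :=
  fun b => transferInv lep (fun a => max (g a) 0) b -
    transferInv lem (fun a => max (-(g a)) 0) b

section Aux
variable {P : Type*} [Fintype P]

def NsetAux (le : P → P → Prop) (h : P → ℝ) (b : P) : Set ℝ :=
  {s : ℝ | ∃ C : Finset P, (∀ a ∈ C, ∀ a' ∈ C, le a a' ∨ le a' a) ∧
    (∀ a ∈ C, le a b ∧ a ≠ b) ∧ s = ∑ a ∈ C, h a}

lemma NsetAux_finite (le : P → P → Prop) (h : P → ℝ) (b : P) : (NsetAux le h b).Finite := by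
  apply (Set.finite_range (fun C : Finset P => ∑ a ∈ C, h a)).subset
  rintro s ⟨C, -, -, rfl⟩; exact ⟨C, rfl⟩

lemma NsetAux_zero_mem (le : P → P → Prop) (h : P → ℝ) (b : P) : (0:ℝ) ∈ NsetAux le h b :=
  ⟨∅, by simp, by simp, by simp⟩

noncomputable def NvalAux (le : P → P → Prop) (h : P → ℝ) (b : P) : ℝ :=
  sSup (NsetAux le h b)

lemma NvalAux_isGreatest (le : P → P → Prop) (h : P → ℝ) (b : P) :
    IsGreatest (NsetAux le h b) (NvalAux le h b) :=
  ⟨Set.Nonempty.csSup_mem ⟨0, NsetAux_zero_mem le h b⟩ (NsetAux_finite le h b),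
   fun _ hx => le_csSup (NsetAux_finite le h b).bddAbove hx⟩

lemma transferInv_decomp (le : P → P → Prop) (hrefl : ∀ a, le a a) (h : P → ℝ) (b : P) :
    transferInv le h b = h b + NvalAux le h b := by
  classical
  have himg : {s : ℝ | ∃ C : Finset P, (∀ a ∈ C, ∀ a' ∈ C, le a a' ∨ le a' a) ∧
      b ∈ C ∧ (∀ a ∈ C, le a b) ∧ s = ∑ a ∈ C, h a} =
      (fun x => h b + x) '' NsetAux le h b := by
    ext s
    constructor
    · rintro ⟨C, hchain, hbC, hle, rfl⟩
      refine ⟨∑ a ∈ C.erase b, h a, ⟨C.erase b,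
        fun a ha a' ha' => hchain a (Finset.mem_of_mem_erase ha) a' (Finset.mem_of_mem_erase ha'),
        fun a ha => ⟨hle a (Finset.mem_of_mem_erase ha), Finset.ne_of_mem_erase ha⟩, rfl⟩, ?_⟩
      exact Finset.add_sum_erase C h hbC
    · rintro ⟨x, ⟨C, hchain, hcond, rfl⟩, rfl⟩
      have hbC : b ∉ C := fun hbC => (hcond b hbC).2 rfl
      refine ⟨insert b C, ?_, Finset.mem_insert_self b C, ?_, ?_⟩
      · intro a ha a' ha'
        rcases Finset.mem_insert.1 ha with hab | haC
        · rcases Finset.mem_insert.1 ha' with hab' | haC'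
          · exact Or.inl (by rw [hab, hab']; exact hrefl b)
          · exact Or.inr (by rw [hab]; exact (hcond a' haC').1)
        · rcases Finset.mem_insert.1 ha' with hab' | haC'
          · exact Or.inl (by rw [hab']; exact (hcond a haC).1)
          · exact hchain a haC a' haC'
      · intro a ha
        rcases Finset.mem_insert.1 ha with hab | haC
        · rw [hab]; exact hrefl b
        · exact (hcond a haC).1
      · exact (Finset.sum_insert hbC).symm
  rw [transferInv, himg]
  refine IsGreatest.csSup_eq ⟨⟨NvalAux le h b, (NvalAux_isGreatest le h b).1, rfl⟩, ?_⟩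
  rintro x ⟨y, hy, rfl⟩
  exact (add_le_add_iff_left (h b)).2 ((NvalAux_isGreatest le h b).2 hy)

lemma NvalAux_congr {le : P → P → Prop} {h h' : P → ℝ} {b : P}
    (hhh : ∀ a, le a b → a ≠ b → h a = h' a) : NvalAux le h b = NvalAux le h' b := by
  have : NsetAux le h b = NsetAux le h' b := by
    ext s
    constructor
    · rintro ⟨C, h1, h2, rfl⟩
      exact ⟨C, h1, h2, Finset.sum_congr rfl fun a ha => hhh a (h2 a ha).1 (h2 a ha).2⟩
    · rintro ⟨C, h1, h2, rfl⟩
      exact ⟨C, h1, h2, Finset.sum_congr rfl fun a ha => (hhh a (h2 a ha).1 (h2 a ha).2).symm⟩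
  rw [NvalAux, this, NvalAux]

lemma NvalAux_int {le : P → P → Prop} {h : P → ℝ} {b : P}
    (hint : ∀ a, le a b → a ≠ b → ∃ m : ℤ, h a = m) :
    ∃ m : ℤ, NvalAux le h b = m := by
  classical
  obtain ⟨C, -, h2, hs⟩ := (NvalAux_isGreatest le h b).1
  choose! m hm using hint
  refine ⟨∑ a ∈ C, m a, ?_⟩
  rw [hs]
  push_cast
  exact Finset.sum_congr rfl fun a ha => hm a (h2 a ha).1 (h2 a ha).2

end Aux

/-- For a compatible double poset, the double transfer map `Ψ` is a bijection of
`ℝ^P` onto itself and restricts to a bijection of `ℤ^P` onto `ℤ^P`. -/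
theorem doubleTransfer_bijective_and_lattice_preserving
    (P : Type*) [Fintype P] (lep lem : P → P → Prop)
    (hp : IsPartialOrder P lep) (hm : IsPartialOrder P lem)
    (hcomp : Compatible P lep lem) :
    Function.Bijective (doubleTransfer lep lem) ∧
    Set.BijOn (doubleTransfer lep lem)
      {g : P → ℝ | ∀ a, ∃ m : ℤ, g a = (m : ℝ)}
      {g : P → ℝ | ∀ a, ∃ m : ℤ, g a = (m : ℝ)} := by
  classical
  obtain ⟨l, hl, hpl, hml⟩ := hcomp
  haveI := hl
  have hprefl : ∀ a, lep a a := fun a => hp.refl a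
  have hmrefl : ∀ a, lem a a := fun a => hm.refl a
  set s : P → P → Prop := fun a b => l a b ∧ a ≠ b with hsdef
  have hwf : WellFounded s := by
    haveI : IsTrans P s := ⟨fun a b c h1 h2 =>
      ⟨trans_of l h1.1 h2.1, fun he => h2.2 (antisymm_of l h2.1 (he ▸ h1.1))⟩⟩
    haveI : IsIrrefl P s := ⟨fun a h => h.2 rfl⟩
    exact Finite.wellFounded_of_trans_of_irrefl s
  set T : (P → ℝ) → P → ℝ := fun g b =>
    NvalAux lep (fun a => max (g a) 0) b - NvalAux lem (fun a => max (-(g a)) 0) b with hTdef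
  have key : ∀ x : ℝ, max x 0 - max (-x) 0 = x := by
    intro x
    rcases le_total x 0 with h | h
    · rw [max_eq_right h, max_eq_left (neg_nonneg.2 h)]; ring
    · rw [max_eq_left h, max_eq_right (neg_nonpos.2 h)]; ring
  have hΨ : ∀ g b, doubleTransfer lep lem g b = g b + T g b := by
    intro g b
    rw [doubleTransfer, transferInv_decomp lep hprefl, transferInv_decomp lem hmrefl, hTdef]
    have := key (g b)
    dsimp only
    linarith
  have hTcongr : ∀ g g' b, (∀ a, s a b → g a = g' a) → T g b = T g' b := by
    intro g g' b hgg
    have e1 : NvalAux lep (fun a => max (g a) 0) b = NvalAux lep (fun a => max (g' a) 0) b :=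
      NvalAux_congr (fun a h1 h2 => by rw [hgg a ⟨hpl a b h1, h2⟩])
    have e2 : NvalAux lem (fun a => max (-(g a)) 0) b = NvalAux lem (fun a => max (-(g' a)) 0) b :=
      NvalAux_congr (fun a h1 h2 => by rw [hgg a ⟨hml a b h1, h2⟩])
    rw [hTdef]
    dsimp only
    rw [e1, e2]
  have hTint : ∀ g b, (∀ a, s a b → ∃ m : ℤ, g a = (m : ℝ)) → ∃ m : ℤ, T g b = (m : ℝ) := by
    intro g b hgint
    obtain ⟨m1, hm1⟩ := NvalAux_int (le := lep) (h := fun a => max (g a) 0) (b := b)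
      (fun a h1 h2 => by
        obtain ⟨m, hmm⟩ := hgint a ⟨hpl a b h1, h2⟩
        exact ⟨max m 0, by rw [hmm]; push_cast; rfl⟩)
    obtain ⟨m2, hm2⟩ := NvalAux_int (le := lem) (h := fun a => max (-(g a)) 0) (b := b)
      (fun a h1 h2 => by
        obtain ⟨m, hmm⟩ := hgint a ⟨hml a b h1, h2⟩
        exact ⟨max (-m) 0, by rw [hmm]; push_cast; rfl⟩)
    exact ⟨m1 - m2, by rw [hTdef]; dsimp only; rw [hm1, hm2]; push_cast; ring⟩
  have hexists : ∀ f : P → ℝ, ∃ g : P → ℝ, ∀ b, g b = f b - T g b := by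
    intro f
    set F : ∀ b : P, (∀ a, s a b → ℝ) → ℝ :=
      fun b ih => f b - T (fun a => if h : s a b then ih a h else 0) b with hFdef
    refine ⟨hwf.fix F, fun b => ?_⟩
    have heq := hwf.fix_eq F b
    rw [heq, hFdef]
    dsimp only
    rw [hTcongr _ (hwf.fix F) b (fun a ha => dif_pos ha)]
  have hinj : Function.Injective (doubleTransfer lep lem) := by
    intro g₁ g₂ hgg
    funext b
    refine hwf.induction (C := fun b => g₁ b = g₂ b) b (fun b IH => ?_)
    have h1 := hΨ g₁ b
    have h2 := hΨ g₂ b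
    have h3 := congrFun hgg b
    rw [h1, h2, hTcongr g₁ g₂ b IH] at h3
    linarith
  have hsurj : Function.Surjective (doubleTransfer lep lem) := by
    intro f
    obtain ⟨g, hg⟩ := hexists f
    exact ⟨g, funext fun b => by rw [hΨ, hg b]; ring⟩
  refine ⟨⟨hinj, hsurj⟩, ?_, hinj.injOn, ?_⟩
  · intro g hg b
    obtain ⟨m1, hm1⟩ := hg b
    obtain ⟨m2, hm2⟩ := hTint g b (fun a _ => hg a)
    exact ⟨m1 + m2, by rw [hΨ, hm1, hm2]; push_cast; ring⟩
  · intro f hf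
    obtain ⟨g, hg⟩ := hexists f
    have hgZ : ∀ b, ∃ m : ℤ, g b = m := by
      intro b
      refine hwf.induction (C := fun b => ∃ m : ℤ, g b = (m : ℝ)) b (fun b IH => ?_)
      obtain ⟨m1, hm1⟩ := hf b
      obtain ⟨m2, hm2⟩ := hTint g b IH
      exact ⟨m1 - m2, by rw [hg b, hm1, hm2]; push_cast; ring⟩
    exact ⟨g, hgZ, funext fun b => by rw [hΨ, hg b]; ring⟩
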